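/- arXiv:0811.3709 — 4 statements merged into one kernel-verified Lean document; each statement's English description precedes it below -/
import Mathlib

section
/- Let n ≥ 1, let q₀, v ∈ ℝⁿ, and let λ > 0. Let q(t) = q₀ + t·v (a geodesic of Euclidean space) and let ξ(t) = q(t) − λ·v. If ξ̂ : ℝ → ℝⁿ is differentiable and satisfies the reduced-observer equation ξ̂'(t) = −(ξ̂(t) − q(t))/λ for all t ≥ 0, then for all t ≥ 0 one has ‖ξ̂(t) − ξ(t)‖ = exp(−t/λ)·‖ξ̂(0) − ξ(0)‖. -/
/-- In Euclidean space ℝⁿ, along the geodesic `q t = q₀ + t • v`, any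
differentiable solution `ξ̂` of the reduced-observer equation
`ξ̂' t = -(ξ̂ t - q t) / λ` (for `t ≥ 0`) tracks the point `ξ t = q t - λ • v`
with exact exponential rate: `‖ξ̂ t - ξ t‖ = exp (-t/λ) * ‖ξ̂ 0 - ξ 0‖` for all `t ≥ 0`. -/
theorem reduced_observer_euclidean_exact_exponential
    (n : ℕ) (hn : 1 ≤ n) (q₀ v : EuclideanSpace ℝ (Fin n)) (lam : ℝ) (hlam : 0 < lam)
    (q ξ : ℝ → EuclideanSpace ℝ (Fin n))
    (hq : ∀ t, q t = q₀ + t • v)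
    (hξ : ∀ t, ξ t = q t - lam • v)
    (ξhat : ℝ → EuclideanSpace ℝ (Fin n))
    (hdiff : Differentiable ℝ ξhat)
    (hobs : ∀ t, 0 ≤ t → deriv ξhat t = -(lam⁻¹) • (ξhat t - q t)) :
    ∀ t, 0 ≤ t → ‖ξhat t - ξ t‖ = Real.exp (-t / lam) * ‖ξhat 0 - ξ 0‖ := by
  set err : ℝ → EuclideanSpace ℝ (Fin n) := fun t => ξhat t - ξ t with herr
  set f : ℝ → EuclideanSpace ℝ (Fin n) := fun t => Real.exp (t / lam) • err t with hf
  have hξeq : ∀ t, ξ t = q₀ + t • v - lam • v := by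
    intro t; rw [hξ, hq]
  have hξd : ∀ t, HasDerivAt ξ v t := by
    intro t
    have h1 : HasDerivAt (fun t : ℝ => t • v) v t := by
      simpa using (hasDerivAt_id t).smul_const v
    have h2 : HasDerivAt (fun t : ℝ => q₀ + t • v - lam • v) v t := by
      simpa using ((h1.const_add q₀).sub_const (lam • v))
    exact h2.congr_of_eventuallyEq (Filter.Eventually.of_forall fun s => hξeq s)
  have herrd : ∀ s : ℝ, 0 ≤ s → HasDerivAt err (-(lam⁻¹) • err s) s := by
    intro s hs
    have h1 : HasDerivAt ξhat (deriv ξhat s) s := (hdiff s).hasDerivAt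
    have h2 := h1.sub (hξd s)
    have h3 : deriv ξhat s - v = -(lam⁻¹) • err s := by
      rw [hobs s hs, herr]
      simp only [hξ s]
      have h4 : ξhat s - (q s - lam • v) = (ξhat s - q s) + lam • v := by abel
      rw [h4, smul_add, neg_smul, neg_smul, smul_smul,
        inv_mul_cancel₀ (ne_of_gt hlam), one_smul]
      abel
    rwa [h3] at h2
  have hfd : ∀ s : ℝ, 0 ≤ s → HasDerivAt f 0 s := by
    intro s hs
    have hdiv : HasDerivAt (fun t : ℝ => t / lam) lam⁻¹ s := by
      simpa [div_eq_mul_inv] using (hasDerivAt_id s).mul_const lam⁻¹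
    have hexp : HasDerivAt (fun t : ℝ => Real.exp (t / lam))
        (Real.exp (s / lam) * lam⁻¹) s := by
      exact (Real.hasDerivAt_exp (s / lam)).comp s hdiv
    have h5 := hexp.smul (herrd s hs)
    simp only [hf]
    refine h5.congr_deriv ?_
    rw [smul_smul]
    have h6 : Real.exp (s / lam) * -lam⁻¹ = -(Real.exp (s / lam) * lam⁻¹) := by ring
    simp [h6, neg_smul]
  intro t ht
  have hξc : Continuous ξ := by
    have hc : Continuous (fun t : ℝ => q₀ + t • v - lam • v) := by continuity
    exact hc.congr (fun s => (hξeq s).symm)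
  have hcont : Continuous f :=
    ((Real.continuous_exp.comp (continuous_id.div_const lam)).smul
      (hdiff.continuous.sub hξc))
  have hconst : f t = f 0 := by
    apply constant_of_has_deriv_right_zero (hcont.continuousOn) _ t (Set.right_mem_Icc.2 ht)
    intro x hx
    exact (hfd x hx.1).hasDerivWithinAt
  have hkey : Real.exp (t / lam) • err t = err 0 := by
    simpa [hf] using hconst
  have hnorm : Real.exp (t / lam) * ‖err t‖ = ‖err 0‖ := by
    rw [← hkey, norm_smul, Real.norm_eq_abs, abs_of_pos (Real.exp_pos _)]
  have hfin := congrArg (fun x => Real.exp (-t / lam) * x) hnorm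
  show ‖err t‖ = Real.exp (-t / lam) * ‖err 0‖
  rw [← hfin, ← mul_assoc, ← Real.exp_add]
  simp [neg_div]
end

section
/- Let n ≥ 1, q₀, v ∈ ℝⁿ, λ > 0, q(t) = q₀ + t·v, and let ξ̂ : ℝ → ℝⁿ be differentiable with ξ̂'(t) = −(ξ̂(t) − q(t))/λ for t ≥ 0. Then ‖ξ̂(t) − q(t)‖ converges to λ‖v‖ as t → ∞; more precisely, for all t ≥ 0, | ‖ξ̂(t) − q(t)‖ − λ‖v‖ | ≤ exp(−t/λ)·‖ξ̂(0) − q(0) + λv‖. Hence ξ̂ asymptotically moves behind q at the fixed distance λ‖v‖. -/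
/-- In Euclidean space ℝⁿ, for the reduced observer
`ξ̂' t = -(ξ̂ t - q t)/λ` along the geodesic `q t = q₀ + t • v`, the distance
`‖ξ̂ t - q t‖` converges to `λ‖v‖` as `t → ∞`; more precisely for all `t ≥ 0`,
`| ‖ξ̂ t - q t‖ - λ‖v‖ | ≤ exp (-t/λ) * ‖ξ̂ 0 - q 0 + λ • v‖`. -/
theorem reduced_observer_euclidean_distance_convergence
    (n : ℕ) (hn : 1 ≤ n) (q₀ v : EuclideanSpace ℝ (Fin n)) (lam : ℝ) (hlam : 0 < lam)
    (q : ℝ → EuclideanSpace ℝ (Fin n))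
    (hq : ∀ t, q t = q₀ + t • v)
    (ξhat : ℝ → EuclideanSpace ℝ (Fin n))
    (hdiff : Differentiable ℝ ξhat)
    (hobs : ∀ t, 0 ≤ t → deriv ξhat t = -(lam⁻¹) • (ξhat t - q t)) :
    (∀ t, 0 ≤ t →
        |‖ξhat t - q t‖ - lam * ‖v‖| ≤ Real.exp (-t / lam) * ‖ξhat 0 - q 0 + lam • v‖) ∧
    Filter.Tendsto (fun t => ‖ξhat t - q t‖) Filter.atTop (nhds (lam * ‖v‖)) := by
  set f : ℝ → EuclideanSpace ℝ (Fin n) := fun t => ξhat t - q t + lam • v with hf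
  set g : ℝ → EuclideanSpace ℝ (Fin n) := fun t => Real.exp (t / lam) • f t with hg
  -- q has derivative v
  have hq' : ∀ t : ℝ, HasDerivAt q v t := by
    intro t
    have : HasDerivAt (fun t : ℝ => q₀ + t • v) v t := by
      simpa using ((hasDerivAt_id t).smul_const v).const_add q₀
    exact this.congr_of_eventuallyEq (Filter.Eventually.of_forall fun s => hq s)
  have hfderiv : ∀ t : ℝ, 0 ≤ t → HasDerivAt f (-(lam⁻¹) • f t) t := by
    intro t ht
    have hξ : HasDerivAt ξhat (-(lam⁻¹) • (ξhat t - q t)) t := by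
      have := (hdiff t).hasDerivAt
      rwa [hobs t ht] at this
    have h1 : HasDerivAt (fun s => ξhat s - q s + lam • v)
        (-(lam⁻¹) • (ξhat t - q t) - v) t := (hξ.sub (hq' t)).add_const _
    have h2 : -(lam⁻¹) • (ξhat t - q t) - v = -(lam⁻¹) • f t := by
      simp only [hf, smul_add, smul_smul]
      rw [neg_mul, inv_mul_cancel₀ hlam.ne']
      simp [neg_smul]
      abel
    rwa [h2] at h1
  have hgderiv : ∀ t : ℝ, 0 ≤ t → HasDerivAt g 0 t := by
    intro t ht
    have he : HasDerivAt (fun s : ℝ => Real.exp (s / lam)) (lam⁻¹ * Real.exp (t / lam)) t := by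
      have : HasDerivAt (fun s : ℝ => s / lam) lam⁻¹ t := by
        simpa [div_eq_mul_inv] using (hasDerivAt_id t).mul_const lam⁻¹
      have h := (Real.hasDerivAt_exp (t / lam)).comp t this
      rw [mul_comm] at h
      exact h
    have := he.smul (hfderiv t ht)
    have h0 : Real.exp (t / lam) • (-(lam⁻¹) • f t) + (lam⁻¹ * Real.exp (t / lam)) • f t
        = (0 : EuclideanSpace ℝ (Fin n)) := by
      simp [smul_smul, mul_comm]
    rwa [h0] at this
  -- g is constant on [0, ∞)
  have hgconst : ∀ t : ℝ, 0 ≤ t → g t = g 0 := by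
    intro t ht
    have hcont : ContinuousOn g (Set.Icc 0 t) := by
      apply Continuous.continuousOn
      exact (Real.continuous_exp.comp (continuous_id.div_const lam)).smul
        (((hdiff.continuous.sub (by
          have : Continuous q := by
            have : Continuous (fun t : ℝ => q₀ + t • v) := by continuity
            exact this.congr fun s => (hq s).symm
          exact this)).add continuous_const))
    exact constant_of_has_deriv_right_zero hcont
      (fun x hx => ((hgderiv x hx.1).hasDerivWithinAt)) t (Set.mem_Icc.2 ⟨ht, le_refl t⟩)
  have hfval : ∀ t : ℝ, 0 ≤ t → f t = Real.exp (-t / lam) • f 0 := by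
    intro t ht
    have := hgconst t ht
    simp only [hg] at this
    have hexp : Real.exp (0 / lam) = 1 := by norm_num
    rw [hexp, one_smul] at this
    have : f t = (Real.exp (t / lam))⁻¹ • f 0 := by
      rw [← this, smul_smul, inv_mul_cancel₀ (Real.exp_ne_zero _), one_smul]
    rw [this, ← Real.exp_neg, neg_div]
  have key : ∀ t : ℝ, 0 ≤ t →
      |‖ξhat t - q t‖ - lam * ‖v‖| ≤ Real.exp (-t / lam) * ‖ξhat 0 - q 0 + lam • v‖ := by
    intro t ht
    have h1 : ξhat t - q t - (-(lam • v)) = f t := by simp only [hf, sub_neg_eq_add]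
    have h2 : ‖(-(lam • v) : EuclideanSpace ℝ (Fin n))‖ = lam * ‖v‖ := by
      rw [norm_neg, norm_smul, Real.norm_eq_abs, abs_of_pos hlam]
    calc |‖ξhat t - q t‖ - lam * ‖v‖|
        = |‖ξhat t - q t‖ - ‖(-(lam • v) : EuclideanSpace ℝ (Fin n))‖| := by rw [h2]
      _ ≤ ‖ξhat t - q t - (-(lam • v))‖ := abs_norm_sub_norm_le _ _
      _ = ‖f t‖ := by rw [h1]
      _ = Real.exp (-t / lam) * ‖f 0‖ := by
          rw [hfval t ht, norm_smul, Real.norm_eq_abs, abs_of_pos (Real.exp_pos _)]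
      _ = Real.exp (-t / lam) * ‖ξhat 0 - q 0 + lam • v‖ := rfl
  refine ⟨key, ?_⟩
  rw [tendsto_iff_dist_tendsto_zero]
  have hbnd : Filter.Tendsto (fun t : ℝ => Real.exp (-t / lam) * ‖ξhat 0 - q 0 + lam • v‖)
      Filter.atTop (nhds 0) := by
    have h1 : Filter.Tendsto (fun t : ℝ => -t / lam) Filter.atTop Filter.atBot := by
      have : Filter.Tendsto (fun t : ℝ => t / lam) Filter.atTop Filter.atTop :=
        Filter.tendsto_id.atTop_div_const hlam
      simpa [neg_div] using (Filter.tendsto_neg_atBot_iff.2 this)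
    have h2 := Real.tendsto_exp_atBot.comp h1
    simpa using h2.mul_const ‖ξhat 0 - q 0 + lam • v‖
  apply squeeze_zero' (Filter.Eventually.of_forall fun t => dist_nonneg) _ hbnd
  filter_upwards [Filter.eventually_ge_atTop (0 : ℝ)] with t ht
  simpa [Real.dist_eq] using key t ht
end

section
/- Let A > 0 and let K : ℝ → ℝ be continuous with K(σ) ≤ A for all σ. Let z : ℝ → ℝ be twice continuously differentiable with z''(σ) = −K(σ)·z(σ), z(0) = 0, z'(0) = 1. Let y(σ) = sin(√A·σ)/√A, so y'(σ) = cos(√A·σ) and y(σ)/y'(σ) = tan(√A·σ)/√A. Then for all σ with 0 < σ < π/(2√A): z'(σ) > 0 and z(σ)/z'(σ) ≤ tan(√A·σ)/√A. -/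
/-- Auxiliary lemma: if `z' > 0` on `[0, c)` and `√A c < π/2`, then `z c > 0` and
the Wronskian inequality `z c * (√A cos(√A c)) ≤ z' c * sin(√A c)` holds. -/
lemma sturm_aux (A : ℝ) (hA : 0 < A)
    (K : ℝ → ℝ) (hKA : ∀ σ, K σ ≤ A)
    (z : ℝ → ℝ) (hz : ContDiff ℝ 2 z)
    (hzeq : ∀ σ, deriv (deriv z) σ = -K σ * z σ)
    (hz0 : z 0 = 0)
    (c : ℝ) (hc0 : 0 < c) (hcb : Real.sqrt A * c < Real.pi / 2)
    (hpos : ∀ t, 0 ≤ t → t < c → 0 < deriv z t) :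
    0 < z c ∧
      z c * (Real.sqrt A * Real.cos (Real.sqrt A * c)) ≤
        deriv z c * Real.sin (Real.sqrt A * c) := by
  set sA := Real.sqrt A with hsAdef
  have hsA : 0 < sA := Real.sqrt_pos.mpr hA
  have hsAsq : sA * sA = A := Real.mul_self_sqrt hA.le
  have hz2 : ContDiff ℝ 1 (deriv z) := by
    have h : ContDiff ℝ (1 + 1) z := by norm_num; exact hz
    exact (contDiff_succ_iff_deriv.mp h).2.2
  have hdz : Differentiable ℝ z := hz.differentiable (by norm_num)
  have hdz' : Differentiable ℝ (deriv z) := hz2.differentiable (by norm_num)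
  -- z is strictly monotone on [0, c]
  have hmono : StrictMonoOn z (Set.Icc 0 c) := by
    apply strictMonoOn_of_deriv_pos (convex_Icc 0 c) hdz.continuous.continuousOn
    intro x hx
    rw [interior_Icc] at hx
    exact hpos x hx.1.le hx.2
  have hzpos : ∀ t ∈ Set.Icc (0:ℝ) c, 0 ≤ z t := by
    intro t ht
    rcases eq_or_lt_of_le ht.1 with h | h
    · rw [← h, hz0]
    · have := hmono (Set.left_mem_Icc.mpr hc0.le) ht h
      rw [hz0] at this; exact this.le
  -- the Wronskian
  set W : ℝ → ℝ := fun t => deriv z t * Real.sin (sA * t) - z t * (sA * Real.cos (sA * t))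
    with hWdef
  have hW : ∀ t, HasDerivAt W ((A - K t) * z t * Real.sin (sA * t)) t := by
    intro t
    have hsin : HasDerivAt (fun t => Real.sin (sA * t)) (Real.cos (sA * t) * sA) t := by
      have := (Real.hasDerivAt_sin (sA * t)).comp t
        ((hasDerivAt_id t).const_mul sA)
      simpa [Function.comp_def] using this
    have hcos : HasDerivAt (fun t => Real.cos (sA * t)) (-Real.sin (sA * t) * sA) t := by
      have := (Real.hasDerivAt_cos (sA * t)).comp t
        ((hasDerivAt_id t).const_mul sA)
      simpa [Function.comp_def] using this
    have h1 : HasDerivAt W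
        (deriv (deriv z) t * Real.sin (sA * t) + deriv z t * (Real.cos (sA * t) * sA)
          - (deriv z t * (sA * Real.cos (sA * t)) + z t * (sA * (-Real.sin (sA * t) * sA)))) t :=
      (((hdz' t).hasDerivAt).mul hsin).sub (((hdz t).hasDerivAt).mul (hcos.const_mul sA))
    rw [hzeq t] at h1
    convert h1 using 1
    rw [← hsAsq]; ring
  have hWc : ContinuousOn W (Set.Icc 0 c) :=
    (fun t _ => (hW t).differentiableAt.continuousAt.continuousWithinAt)
  have hWmono : MonotoneOn W (Set.Icc 0 c) := by
    apply monotoneOn_of_deriv_nonneg (convex_Icc 0 c) hWc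
    · intro x hx
      exact ((hW x).differentiableAt).differentiableWithinAt
    · intro x hx
      rw [interior_Icc] at hx
      rw [(hW x).deriv]
      have hzx : 0 ≤ z x := hzpos x ⟨hx.1.le, hx.2.le⟩
      have hsinx : 0 ≤ Real.sin (sA * x) := by
        apply Real.sin_nonneg_of_nonneg_of_le_pi (mul_nonneg hsA.le hx.1.le)
        nlinarith [Real.pi_pos, mul_le_mul_of_nonneg_left hx.2.le hsA.le]
      have hAK : 0 ≤ A - K x := sub_nonneg.mpr (hKA x)
      exact mul_nonneg (mul_nonneg hAK hzx) hsinx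
  have hW0 : W 0 = 0 := by simp [hWdef, hz0]
  have hWfin : 0 ≤ W c := by
    have := hWmono (Set.left_mem_Icc.mpr hc0.le) (Set.right_mem_Icc.mpr hc0.le) hc0.le
    rw [hW0] at this; exact this
  have hzc : 0 < z c := by
    have := hmono (Set.left_mem_Icc.mpr hc0.le) (Set.right_mem_Icc.mpr hc0.le) hc0
    rwa [hz0] at this
  exact ⟨hzc, by simpa [hWdef, sub_nonneg] using hWfin⟩

/-- Sturm comparison step: let `K` be continuous with `K ≤ A` (`A > 0`)
and let `z` solve the scalar Jacobi equation `z'' = -K z`, `z 0 = 0`, `z' 0 = 1`.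
Comparing with `y σ = sin (√A σ)/√A` (whose Riccati quotient is `tan (√A σ)/√A`),
for all `0 < σ < π/(2√A)` one has `z' σ > 0` and `z σ / z' σ ≤ tan (√A σ)/√A`. -/
theorem sturm_comparison_riccati_quotient
    (A : ℝ) (hA : 0 < A)
    (K : ℝ → ℝ) (hKcont : Continuous K) (hKA : ∀ σ, K σ ≤ A)
    (z : ℝ → ℝ) (hz : ContDiff ℝ 2 z)
    (hzeq : ∀ σ, deriv (deriv z) σ = -K σ * z σ)
    (hz0 : z 0 = 0) (hz'0 : deriv z 0 = 1) :
    ∀ σ, 0 < σ → σ < Real.pi / (2 * Real.sqrt A) →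
      0 < deriv z σ ∧
      z σ / deriv z σ ≤ Real.tan (Real.sqrt A * σ) / Real.sqrt A := by
  intro σ hσ0 hσb
  set sA := Real.sqrt A with hsAdef
  have hsA : 0 < sA := Real.sqrt_pos.mpr hA
  have hsAσ : sA * σ < Real.pi / 2 := by
    rw [lt_div_iff₀ (by positivity)] at hσb
    nlinarith
  have hz2 : ContDiff ℝ 1 (deriv z) := by
    have h : ContDiff ℝ (1 + 1) z := by norm_num; exact hz
    exact (contDiff_succ_iff_deriv.mp h).2.2
  -- z' > 0 on all of [0, σ]
  have hall : ∀ t ∈ Set.Icc (0:ℝ) σ, 0 < deriv z t := by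
    by_contra hcon
    push_neg at hcon
    obtain ⟨t, htmem, htle⟩ := hcon
    set s : Set ℝ := Set.Icc 0 σ ∩ (deriv z) ⁻¹' Set.Iic 0 with hsdef
    have hclosed : IsClosed s :=
      isClosed_Icc.inter (isClosed_Iic.preimage hz2.continuous)
    have hne : s.Nonempty := ⟨t, htmem, htle⟩
    have hbdd : BddBelow s := ⟨0, fun x hx => hx.1.1⟩
    set t0 := sInf s with ht0def
    have ht0mem : t0 ∈ s := hclosed.csInf_mem hne hbdd
    have ht0pos : 0 < t0 := by
      rcases eq_or_lt_of_le ht0mem.1.1 with h | h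
      · exfalso
        have := ht0mem.2
        rw [← h] at this
        simp only [Set.mem_preimage, Set.mem_Iic, hz'0] at this
        linarith
      · exact h
    have hpos0 : ∀ u, 0 ≤ u → u < t0 → 0 < deriv z u := by
      intro u hu0 hut0
      by_contra hcon2
      push_neg at hcon2
      have : u ∈ s := ⟨⟨hu0, hut0.le.trans ht0mem.1.2⟩, hcon2⟩
      exact absurd (csInf_le hbdd this) (not_le.mpr hut0)
    have hsAt0 : sA * t0 < Real.pi / 2 := by
      have := ht0mem.1.2
      nlinarith
    obtain ⟨hzt0, hineq⟩ := sturm_aux A hA K hKA z hz hzeq hz0 t0 ht0pos hsAt0 hpos0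
    have hcospos : 0 < Real.cos (sA * t0) :=
      Real.cos_pos_of_mem_Ioo ⟨by nlinarith [Real.pi_pos], hsAt0⟩
    have hsinpos : 0 < Real.sin (sA * t0) := by
      apply Real.sin_pos_of_pos_of_lt_pi (by positivity)
      nlinarith [Real.pi_pos]
    have hdzt0 : deriv z t0 ≤ 0 := ht0mem.2
    have h1 : 0 < z t0 * (sA * Real.cos (sA * t0)) := by positivity
    have h2 : deriv z t0 * Real.sin (sA * t0) ≤ 0 :=
      mul_nonpos_of_nonpos_of_nonneg hdzt0 hsinpos.le
    have : z t0 * (sA * Real.cos (sA * t0)) ≤ deriv z t0 * Real.sin (sA * t0) := hineq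
    linarith
  refine ⟨hall σ ⟨hσ0.le, le_rfl⟩, ?_⟩
  obtain ⟨hzσ, hineq⟩ := sturm_aux A hA K hKA z hz hzeq hz0 σ hσ0 hsAσ
    (fun u hu0 huσ => hall u ⟨hu0, huσ.le⟩)
  have hz'σ : 0 < deriv z σ := hall σ ⟨hσ0.le, le_rfl⟩
  have hcospos : 0 < Real.cos (sA * σ) :=
    Real.cos_pos_of_mem_Ioo ⟨by nlinarith [Real.pi_pos], hsAσ⟩
  rw [Real.tan_eq_sin_div_cos, div_div,
    div_le_div_iff₀ hz'σ (by positivity)]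
  nlinarith
end

section
/- Let A > 0 and let K : ℝ → ℝ be continuous with K(σ) ≤ A for all σ. Let z : ℝ → ℝ be twice continuously differentiable with z''(σ) = −K(σ)·z(σ), z(0) = 0, z'(0) = 1. Then for all σ with 0 ≤ σ ≤ π/(4√A) one has z'(σ)² − A·z(σ)² ≥ 0. -/
open Real Set Filter Topology

/-- let `K` be continuous with `K ≤ A` (`A > 0`) and let `z` solve the
scalar Jacobi equation `z'' = -K z`, `z 0 = 0`, `z' 0 = 1`. Then for all
`0 ≤ σ ≤ π/(4√A)` one has `z'(σ)² - A z(σ)² ≥ 0`. -/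
theorem jacobi_solution_contraction_estimate
    (A : ℝ) (hA : 0 < A)
    (K : ℝ → ℝ) (hKcont : Continuous K) (hKA : ∀ σ, K σ ≤ A)
    (z : ℝ → ℝ) (hz : ContDiff ℝ 2 z)
    (hzeq : ∀ σ, deriv (deriv z) σ = -K σ * z σ)
    (hz0 : z 0 = 0) (hz'0 : deriv z 0 = 1) :
    ∀ σ, 0 ≤ σ → σ ≤ Real.pi / (4 * Real.sqrt A) →
      0 ≤ (deriv z σ) ^ 2 - A * (z σ) ^ 2 := by
  intro σ hσ0 hσT
  have hsA : 0 < Real.sqrt A := Real.sqrt_pos.mpr hA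
  set sA := Real.sqrt A with hsAdef
  have hsq : sA * sA = A := Real.mul_self_sqrt hA.le
  -- differentiability facts
  have hz2 : ContDiff ℝ ((1 : WithTop ℕ∞) + 1) z := by
    have : ((2 : WithTop ℕ∞)) = (1 : WithTop ℕ∞) + 1 := by norm_num
    rw [← this]; exact_mod_cast hz
  have hzdiff : Differentiable ℝ z := hz.differentiable (by norm_num)
  have hz'cd : ContDiff ℝ 1 (deriv z) := (contDiff_succ_iff_deriv.mp hz2).2.2
  have hz'diff : Differentiable ℝ (deriv z) := hz'cd.differentiable one_ne_zero
  have hzcont : Continuous z := hzdiff.continuous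
  -- angle bounds : for 0 ≤ τ ≤ σ, sA * τ ∈ [0, π/4]
  have hangle : ∀ τ : ℝ, 0 ≤ τ → τ ≤ σ → sA * τ ≤ π / 4 := by
    intro τ h0 h1
    have h2 : τ ≤ π / (4 * sA) := le_trans h1 hσT
    calc sA * τ ≤ sA * (π / (4 * sA)) := by
          exact mul_le_mul_of_nonneg_left h2 hsA.le
      _ = π / 4 := by field_simp
  have hcosnn : ∀ τ : ℝ, 0 ≤ τ → τ ≤ σ → 0 ≤ Real.cos (sA * τ) := by
    intro τ h0 h1
    apply Real.cos_nonneg_of_mem_Icc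
    constructor
    · nlinarith [Real.pi_pos, mul_nonneg hsA.le h0]
    · nlinarith [Real.pi_pos, hangle τ h0 h1]
  have hsinnn : ∀ τ : ℝ, 0 ≤ τ → τ ≤ σ → 0 ≤ Real.sin (sA * τ) := by
    intro τ h0 h1
    apply Real.sin_nonneg_of_nonneg_of_le_pi (mul_nonneg hsA.le h0)
    nlinarith [Real.pi_pos, hangle τ h0 h1]
  -- the comparison functions V and W
  set V : ℝ → ℝ := fun τ => deriv z τ * Real.cos (sA * τ) + sA * z τ * Real.sin (sA * τ)
    with hVdef
  set W : ℝ → ℝ := fun τ => deriv z τ * Real.sin (sA * τ) - sA * z τ * Real.cos (sA * τ)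
    with hWdef
  have hlin : ∀ τ : ℝ, HasDerivAt (fun t : ℝ => sA * t) sA τ := by
    intro τ
    simpa using (hasDerivAt_id τ).const_mul sA
  have hVderiv : ∀ τ, HasDerivAt V ((A - K τ) * z τ * Real.cos (sA * τ)) τ := by
    intro τ
    have hz'' : HasDerivAt (deriv z) (-K τ * z τ) τ := by
      rw [← hzeq τ]; exact (hz'diff τ).hasDerivAt
    have hzd : HasDerivAt z (deriv z τ) τ := (hzdiff τ).hasDerivAt
    have hcos : HasDerivAt (fun t : ℝ => Real.cos (sA * t)) (-Real.sin (sA * τ) * sA) τ :=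
      (hlin τ).cos
    have hsin : HasDerivAt (fun t : ℝ => Real.sin (sA * t)) (Real.cos (sA * τ) * sA) τ :=
      (hlin τ).sin
    have h := ((hz''.mul hcos).add (((hzd.const_mul sA)).mul hsin))
    refine h.congr_deriv ?_
    linear_combination (z τ * Real.cos (sA * τ)) * hsq
  have hWderiv : ∀ τ, HasDerivAt W ((A - K τ) * z τ * Real.sin (sA * τ)) τ := by
    intro τ
    have hz'' : HasDerivAt (deriv z) (-K τ * z τ) τ := by
      rw [← hzeq τ]; exact (hz'diff τ).hasDerivAt
    have hzd : HasDerivAt z (deriv z τ) τ := (hzdiff τ).hasDerivAt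
    have hcos : HasDerivAt (fun t : ℝ => Real.cos (sA * t)) (-Real.sin (sA * τ) * sA) τ :=
      (hlin τ).cos
    have hsin : HasDerivAt (fun t : ℝ => Real.sin (sA * t)) (Real.cos (sA * τ) * sA) τ :=
      (hlin τ).sin
    have h := ((hz''.mul hsin).sub (((hzd.const_mul sA)).mul hcos))
    refine h.congr_deriv ?_
    linear_combination (z τ * Real.sin (sA * τ)) * hsq
  have hV0 : V 0 = 1 := by simp [hVdef, hz0, hz'0]
  have hW0 : W 0 = 0 := by simp [hWdef, hz0, hz'0]
  -- monotonicity of V and W on intervals where z ≥ 0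
  have hmono : ∀ (F : ℝ → ℝ) (g : ℝ → ℝ),
      (∀ τ, HasDerivAt F ((A - K τ) * z τ * g τ) τ) →
      ∀ m, 0 ≤ m → m ≤ σ → (∀ τ, 0 < τ → τ < m → 0 ≤ z τ) →
      (∀ τ, 0 ≤ τ → τ ≤ σ → 0 ≤ g τ) → F 0 ≤ F m := by
    intro F g hF m hm0 hmσ hznn hg
    have hFd : Differentiable ℝ F := fun τ => (hF τ).differentiableAt
    have : MonotoneOn F (Icc 0 m) := by
      apply monotoneOn_of_deriv_nonneg (convex_Icc 0 m) hFd.continuous.continuousOn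
        (hFd.differentiableOn)
      intro x hx
      rw [interior_Icc] at hx
      rw [(hF x).deriv]
      have hx0 : 0 < x := hx.1
      have hxm : x < m := hx.2
      have := hznn x hx0 hxm
      have hgx := hg x hx0.le (le_trans hxm.le hmσ)
      have hKx : 0 ≤ A - K x := by linarith [hKA x]
      exact mul_nonneg (mul_nonneg hKx this) hgx
    exact this (by simp [hm0]) (by simp [hm0]) hm0
  -- z is nonnegative on [0, σ]
  have hznn : ∀ τ, 0 ≤ τ → τ ≤ σ → 0 ≤ z τ := by
    by_contra hcon
    push_neg at hcon
    obtain ⟨b, hb0, hbσ, hbneg⟩ := hcon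
    -- z is positive just to the right of 0
    have hslope0 : Tendsto (slope z 0) (𝓝[>] 0) (𝓝 1) := by
      have := (hasDerivAt_iff_tendsto_slope.mp ((hzdiff 0).hasDerivAt))
      rw [hz'0] at this
      exact this.mono_left (nhdsWithin_mono 0 (fun x hx => ne_of_gt hx))
    have hev : ∀ᶠ τ in 𝓝[>] (0:ℝ), 0 < slope z 0 τ :=
      hslope0.eventually (eventually_gt_nhds one_pos)
    obtain ⟨ε, hε0, hεsub⟩ := mem_nhdsGT_iff_exists_Ioc_subset.mp hev
    have hεpos : (0:ℝ) < ε := hε0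
    have hposε : ∀ τ, 0 < τ → τ ≤ ε → 0 < z τ := by
      intro τ h1 h2
      have := hεsub ⟨h1, h2⟩
      simp only [Set.mem_setOf_eq] at this
      rw [slope_def_field] at this
      have : 0 < (z τ - z 0) / (τ - 0) := this
      rw [hz0] at this
      have h3 : 0 < z τ / τ := by simpa using this
      have := (div_pos_iff.mp h3)
      rcases this with ⟨h4, _⟩ | ⟨_, h5⟩
      · exact h4
      · linarith
    have hb0' : 0 < b := by
      rcases lt_or_eq_of_le hb0 with h | h
      · exact h
      · rw [← h] at hbneg; rw [hz0] at hbneg; linarith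
    have hεb : ε < b ∨ b ≤ ε := lt_or_ge ε b
    have hεb' : ε < b := by
      rcases hεb with h | h
      · exact h
      · exact absurd (hposε b hb0' h) (not_lt.mpr hbneg.le)
    -- the first bad point
    set B := {τ : ℝ | τ ∈ Icc ε b ∧ z τ ≤ 0} with hBdef
    have hBclosed : IsClosed B := (isClosed_Icc.inter (isClosed_le hzcont continuous_const))
    have hBne : B.Nonempty := ⟨b, ⟨hεb'.le, le_rfl⟩, hbneg.le⟩
    have hBbdd : BddBelow B := ⟨ε, fun x hx => hx.1.1⟩
    set m := sInf B with hmdef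
    have hmB : m ∈ B := hBclosed.csInf_mem hBne hBbdd
    have hmε : ε ≤ m := hmB.1.1
    have hmb : m ≤ b := hmB.1.2
    have hzm : z m ≤ 0 := hmB.2
    have hm0 : 0 < m := lt_of_lt_of_le hεpos hmε
    have hmσ : m ≤ σ := le_trans hmb hbσ
    -- z ≥ 0 on (0, m)
    have hpos_before : ∀ τ, 0 < τ → τ < m → 0 ≤ z τ := by
      intro τ h1 h2
      rcases le_or_gt τ ε with h | h
      · exact (hposε τ h1 h).le
      · by_contra hneg
        push_neg at hneg
        have : τ ∈ B := ⟨⟨h.le, le_trans h2.le hmb⟩, hneg.le⟩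
        have := csInf_le hBbdd this
        linarith
    -- hence V m ≥ 1
    have hVm : 1 ≤ V m := by
      rw [← hV0]
      exact hmono V (fun τ => Real.cos (sA * τ)) hVderiv m hm0.le hmσ hpos_before hcosnn
    -- so deriv z m > 0
    have hz'm : 0 < deriv z m := by
      have hc := hcosnn m hm0.le hmσ
      have hs := hsinnn m hm0.le hmσ
      have hc1 : Real.cos (sA * m) ≤ 1 := Real.cos_le_one _
      have hVm' : deriv z m * Real.cos (sA * m) + sA * z m * Real.sin (sA * m) = V m := rfl
      nlinarith [mul_nonneg (mul_nonneg hsA.le (neg_nonneg.mpr hzm)) hs]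
    -- then z τ < z m ≤ 0 for τ slightly less than m, contradiction
    have hslopem : Tendsto (slope z m) (𝓝[<] m) (𝓝 (deriv z m)) := by
      have := (hasDerivAt_iff_tendsto_slope.mp ((hzdiff m).hasDerivAt))
      exact this.mono_left (nhdsWithin_mono m (fun x hx => ne_of_lt hx))
    have hev2 : ∀ᶠ τ in 𝓝[<] m, 0 < slope z m τ :=
      hslopem.eventually (eventually_gt_nhds hz'm)
    have hev3 : ∀ᶠ τ in 𝓝[<] m, τ ∈ Ioo (0:ℝ) m :=
      eventually_of_mem (Ioo_mem_nhdsLT_of_mem ⟨hm0, le_rfl⟩) (fun x hx => hx)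
    obtain ⟨τ, hτslope, hτmem⟩ := (hev2.and hev3).exists
    rw [slope_def_field] at hτslope
    have hτm : τ - m < 0 := by linarith [hτmem.2]
    have : z τ - z m < 0 := by
      by_contra hge
      push_neg at hge
      have : (z τ - z m) / (τ - m) ≤ 0 := div_nonpos_of_nonneg_of_nonpos hge hτm.le
      linarith
    have hzτ : z τ < 0 := by linarith
    exact absurd (hpos_before τ hτmem.1 hτmem.2) (not_le.mpr hzτ)
  -- now the main conclusion
  rcases eq_or_lt_of_le hσ0 with h | hσpos
  · rw [← h]
    rw [hz0, hz'0]
    norm_num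
  · -- W σ ≥ 0
    have hWσ : 0 ≤ W σ := by
      rw [← hW0]
      exact hmono W (fun τ => Real.sin (sA * τ)) hWderiv σ hσ0 le_rfl
        (fun τ h1 h2 => hznn τ h1.le h2.le) hsinnn
    have hs : 0 < Real.sin (sA * σ) := by
      apply Real.sin_pos_of_pos_of_lt_pi (by positivity)
      nlinarith [Real.pi_pos, hangle σ hσ0 le_rfl]
    have hcs : Real.sin (sA * σ) ≤ Real.cos (sA * σ) := by
      rw [← Real.cos_pi_div_two_sub]
      apply Real.cos_le_cos_of_nonneg_of_le_pi
      · nlinarith [Real.pi_pos, hangle σ hσ0 le_rfl, mul_nonneg hsA.le hσ0]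
      · nlinarith [Real.pi_pos, mul_nonneg hsA.le hσ0]
      · nlinarith [hangle σ hσ0 le_rfl]
    have hzσ : 0 ≤ z σ := hznn σ hσ0 le_rfl
    have hW' : deriv z σ * Real.sin (sA * σ) - sA * z σ * Real.cos (sA * σ) = W σ := rfl
    have hab : sA * z σ ≤ deriv z σ := by
      have h1 : sA * z σ * Real.cos (sA * σ) ≤ deriv z σ * Real.sin (sA * σ) := by
        nlinarith
      have h2 : sA * z σ * Real.sin (sA * σ) ≤ sA * z σ * Real.cos (sA * σ) :=
        mul_le_mul_of_nonneg_left hcs (by positivity)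
      have h3 : sA * z σ * Real.sin (sA * σ) ≤ deriv z σ * Real.sin (sA * σ) := by linarith
      exact le_of_mul_le_mul_right (by linarith [h3]) hs
    nlinarith [mul_nonneg (mul_nonneg hsA.le hzσ) hzσ, sq_nonneg (sA * z σ),
      mul_nonneg hsA.le hzσ]
end
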